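/- Let p be a prime, d a natural number, and a, t a pair of natural numbers. Suppose the base-p expansion of a is a = (p-1) + (p-1)p + ... + (p-1)p^d + c·p^{d+1} with c ∈ {0,1}. Then for every d' with 0 ≤ d' ≤ d, p divides C(a + p^{d'}, p^{d'}). -/

import Mathlib

lemma geom_aux (p : ℕ) (hp : 1 ≤ p) : ∀ n : ℕ,
    (∑ i ∈ Finset.range n, (p - 1) * p ^ i) + 1 = p ^ n := by
  intro n
  induction n with
  | zero => simp
  | succ n ih =>
    rw [Finset.sum_range_succ, pow_succ]
    have h1 : (p - 1) * p ^ n + p ^ n = p ^ n * p := by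
      obtain ⟨q, rfl⟩ := Nat.exists_eq_add_of_le hp
      simp only [Nat.add_sub_cancel_left]
      ring
    omega

lemma div_aux (m q : ℕ) (hq : 1 ≤ q) (hm : 1 ≤ m) : (m * q - 1) / q = m - 1 := by
  apply Nat.div_eq_of_lt_le
  · calc (m - 1) * q ≤ m * q - q := by
          obtain ⟨m', rfl⟩ := Nat.exists_eq_add_of_le hm
          simp only [Nat.add_sub_cancel_left]
          have : (1 + m') * q = q + m' * q := by ring
          omega
      _ ≤ m * q - 1 := by omega
  · have : (m - 1 + 1) * q = m * q := by rw [Nat.sub_add_cancel hm]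
    rw [this]
    have : 1 ≤ m * q := Nat.one_le_iff_ne_zero.mpr (by positivity)
    omega

/-- If `a = (p-1) + (p-1)p + ⋯ + (p-1)p^d + c·p^{d+1}` with `c ∈ {0,1}`, then
`p` divides `C(a + p^{d'}, p^{d'})` for every `d' ≤ d`. -/
theorem stmt_7 (p d a : ℕ) (hp : p.Prime)
    (ha : ∃ c : ℕ, c ≤ 1 ∧ a = (∑ i ∈ Finset.range (d + 1), (p - 1) * p ^ i) + c * p ^ (d + 1)) :
    ∀ d' : ℕ, d' ≤ d → p ∣ Nat.choose (a + p ^ d') (p ^ d') := by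
  haveI : Fact p.Prime := ⟨hp⟩
  obtain ⟨c, hc, rfl⟩ := ha
  intro d' hd'
  have hp1 : 1 < p := hp.one_lt
  set a : ℕ := (∑ i ∈ Finset.range (d + 1), (p - 1) * p ^ i) + c * p ^ (d + 1) with ha
  have hA : a + 1 = (c + 1) * p ^ (d + 1) := by
    have h0 := geom_aux p hp.one_le (d + 1)
    have h2 : (c + 1) * p ^ (d + 1) = c * p ^ (d + 1) + p ^ (d + 1) := by ring
    rw [ha]; omega
  set n : ℕ := a + p ^ d' with hn
  -- rewrite n + 1 = ((c+1) * p^(d-d'+1) + 1) * p^d'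
  have hsplit : p ^ (d + 1) = p ^ (d - d' + 1) * p ^ d' := by
    rw [← pow_add]
    congr 1
    omega
  have hn1 : n = ((c + 1) * p ^ (d - d' + 1) + 1) * p ^ d' - 1 := by
    rw [hn, add_mul, one_mul, mul_assoc, ← hsplit]
    omega
  have hdiv : n / p ^ d' = (c + 1) * p ^ (d - d' + 1) := by
    rw [hn1, div_aux _ _ (Nat.one_le_pow _ _ hp.pos) (Nat.le_add_left 1 _)]
    simp
  have hmod : n / p ^ d' % p = 0 := by
    rw [hdiv]
    have : (c + 1) * p ^ (d - d' + 1) = ((c + 1) * p ^ (d - d')) * p := by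
      rw [pow_succ]; ring
    rw [this, Nat.mul_mod_left]
  have hkmod : p ^ d' / p ^ d' % p = 1 := by
    rw [Nat.div_self (pow_pos hp.pos _), Nat.mod_eq_of_lt hp1]
  -- bounds for Lucas
  have hb1 : n < p ^ (d + 3) := by
    have h1 : (c + 1) * p ^ (d + 1) ≤ 2 * p ^ (d + 1) := by
      apply Nat.mul_le_mul_right
      omega
    have h2 : 2 * p ^ (d + 1) ≤ p * p ^ (d + 1) := Nat.mul_le_mul_right _ hp1
    have h3 : p ^ d' ≤ p ^ (d + 1) := Nat.pow_le_pow_right hp.pos (by omega)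
    have h4 : p ^ (d + 1) < p ^ (d + 3) := Nat.pow_lt_pow_right hp1 (by omega)
    have h5 : p * p ^ (d + 1) = p ^ (d + 2) := by rw [← pow_succ']
    have h6 : p ^ (d + 2) + p ^ (d + 2) ≤ p * p ^ (d + 2) := by
      have := Nat.mul_le_mul_right (p ^ (d + 2)) hp1
      omega
    have h7 : p * p ^ (d + 2) = p ^ (d + 3) := by rw [← pow_succ']
    have h8 : p ^ (d + 1) ≤ p ^ (d + 2) := Nat.pow_le_pow_right hp.pos (by omega)
    omega
  have hb2 : p ^ d' < p ^ (d + 3) := Nat.pow_lt_pow_right hp1 (by omega)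
  have lucas := Choose.choose_modEq_prod_range_choose_nat (p := p)
    (n := n) (k := p ^ d') hb1 hb2
  have hzero : (∏ i ∈ Finset.range (d + 3),
      Nat.choose (n / p ^ i % p) (p ^ d' / p ^ i % p)) = 0 := by
    apply Finset.prod_eq_zero (i := d') (Finset.mem_range.mpr (by omega))
    rw [hmod, hkmod]
    simp
  rw [hzero] at lucas
  exact (Nat.modEq_zero_iff_dvd.mp lucas)
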